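/- arXiv:1508.05292 — 3 statements merged into one kernel-verified Lean document; each statement's English description precedes it below -/
import Mathlib

section
/- For the Baskakov-Schurer-Szász-Stancu operators, L^{(α,β)}_{n,p}(e_2; x) = (n²(n+p+1)/((n+p)(n+β)²)) x² + ((4n² + 2nα(n+p))/((n+p)(n+β)²)) x + (2n² + 2nα(n+p) + α²(n+p)²)/((n+p)²(n+β)²) for all x ≥ 0. -/
open MeasureTheory Set Filter

/-- Szász-type basis function `s^k_{n,p}(t) = e^{-(n+p)t} ((n+p)t)^k / k!`. -/
noncomputable def bssS (n p k : ℕ) (t : ℝ) : ℝ :=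
  Real.exp (-((n : ℝ) + p) * t) * (((n : ℝ) + p) * t) ^ k / (Nat.factorial k)

/-- Baskakov-type basis function `b^k_{n,p}(x) = C(n+p+k-1,k) x^k / (1+x)^{n+p+k}`. -/
noncomputable def bssB (n p k : ℕ) (x : ℝ) : ℝ :=
  (Nat.choose (n + p + k - 1) k : ℝ) * x ^ k / (1 + x) ^ (n + p + k)

/-- Baskakov-Schurer-Szász operator. -/
noncomputable def Lop (n p : ℕ) (f : ℝ → ℝ) (x : ℝ) : ℝ :=
  ((n : ℝ) + p) * ∑' k : ℕ, bssB n p k x * ∫ t in Ioi (0 : ℝ), f t * bssS n p k t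

/-- Baskakov-Schurer-Szász-Stancu operator. -/
noncomputable def LSop (α β : ℝ) (n p : ℕ) (f : ℝ → ℝ) (x : ℝ) : ℝ :=
  Lop n p (fun t => f (((n : ℝ) * t + α) / ((n : ℝ) + β))) x



lemma chooseId (q k : ℕ) : k * (k + q).choose q = (q + 1) * (k + q).choose (q + 1) := by
  have h := Nat.choose_succ_right_eq (k + q) q
  rw [Nat.add_sub_cancel] at h
  rw [mul_comm k, mul_comm (q+1)]
  exact h.symm

lemma hs0 {r : ℝ} (hr : ‖r‖ < 1) (q : ℕ) :
    HasSum (fun k : ℕ => (((k + q).choose q : ℕ) : ℝ) * r ^ k) (1 / (1 - r) ^ (q + 1)) :=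
  hasSum_choose_mul_geometric_of_norm_lt_one q hr

lemma hsShift {r : ℝ} (hr : ‖r‖ < 1) (q : ℕ) :
    HasSum (fun k : ℕ => (((k + q).choose (q + 1) : ℕ) : ℝ) * r ^ k)
      (r / (1 - r) ^ (q + 2)) := by
  have h0 := (hasSum_choose_mul_geometric_of_norm_lt_one (𝕜 := ℝ) (q + 1) hr).mul_left r
  have hfun : (fun k : ℕ => r * ((((k + (q + 1)).choose (q + 1) : ℕ) : ℝ) * r ^ k))
      = fun k : ℕ => ((((k + 1) + q).choose (q + 1) : ℕ) : ℝ) * r ^ (k + 1) := by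
    funext k; rw [show k + 1 + q = k + (q + 1) by omega]; ring
  rw [hfun] at h0
  have := (hasSum_nat_add_iff (f := fun k : ℕ => (((k + q).choose (q + 1) : ℕ) : ℝ) * r ^ k) 1).mp h0
  simpa [Nat.choose_eq_zero_of_lt (Nat.lt_succ_self q), mul_one_div, div_eq_mul_inv, add_assoc] using this

lemma hsShift2 {r : ℝ} (hr : ‖r‖ < 1) (q : ℕ) :
    HasSum (fun k : ℕ => (((k + q).choose (q + 2) : ℕ) : ℝ) * r ^ k)
      (r ^ 2 / (1 - r) ^ (q + 3)) := by
  have h0 := (hasSum_choose_mul_geometric_of_norm_lt_one (𝕜 := ℝ) (q + 2) hr).mul_left (r ^ 2)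
  have hfun : (fun k : ℕ => r ^ 2 * ((((k + (q + 2)).choose (q + 2) : ℕ) : ℝ) * r ^ k))
      = fun k : ℕ => ((((k + 2) + q).choose (q + 2) : ℕ) : ℝ) * r ^ (k + 2) := by
    funext k; rw [show k + 2 + q = k + (q + 2) by omega]; ring
  rw [hfun] at h0
  have := (hasSum_nat_add_iff (f := fun k : ℕ => (((k + q).choose (q + 2) : ℕ) : ℝ) * r ^ k) 2).mp h0
  have hz0 : (0 + q).choose (q + 2) = 0 := Nat.choose_eq_zero_of_lt (by omega)
  have hz1 : (1 + q).choose (q + 2) = 0 := Nat.choose_eq_zero_of_lt (by omega)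
  have hz0' : q.choose (q + 2) = 0 := Nat.choose_eq_zero_of_lt (by omega)
  simpa [Finset.sum_range_succ, hz0, hz1, hz0', div_eq_mul_one_div (r^2),
    show q + 2 + 1 = q + 3 from rfl] using this

lemma hs1 {r : ℝ} (hr : ‖r‖ < 1) (q : ℕ) :
    HasSum (fun k : ℕ => (k : ℝ) * (((k + q).choose q : ℕ) : ℝ) * r ^ k)
      (((q : ℝ) + 1) * r / (1 - r) ^ (q + 2)) := by
  have h := (hsShift hr q).mul_left ((q : ℝ) + 1)
  have hfun : (fun k : ℕ => ((q : ℝ) + 1) * ((((k + q).choose (q + 1) : ℕ) : ℝ) * r ^ k))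
      = fun k : ℕ => (k : ℝ) * (((k + q).choose q : ℕ) : ℝ) * r ^ k := by
    funext k
    have hid := congrArg (Nat.cast : ℕ → ℝ) (chooseId q k)
    push_cast at hid
    linear_combination (-(r ^ k)) * hid
  rw [hfun] at h
  rw [mul_div_assoc]
  exact h

lemma hs2 {r : ℝ} (hr : ‖r‖ < 1) (q : ℕ) :
    HasSum (fun k : ℕ => (k : ℝ) * ((k : ℝ) - 1) * (((k + q).choose q : ℕ) : ℝ) * r ^ k)
      (((q : ℝ) + 1) * ((q : ℝ) + 2) * r ^ 2 / (1 - r) ^ (q + 3)) := by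
  have h := (hsShift2 hr q).mul_left (((q : ℝ) + 1) * ((q : ℝ) + 2))
  have hfun : (fun k : ℕ => (((q : ℝ) + 1) * ((q : ℝ) + 2)) * ((((k + q).choose (q + 2) : ℕ) : ℝ) * r ^ k))
      = fun k : ℕ => (k : ℝ) * ((k : ℝ) - 1) * (((k + q).choose q : ℕ) : ℝ) * r ^ k := by
    funext k
    match k with
    | 0 =>
      have hz : q.choose (q + 2) = 0 := Nat.choose_eq_zero_of_lt (by omega)
      simp [hz]
    | Nat.succ k' =>
      have h1 := congrArg (Nat.cast : ℕ → ℝ) (chooseId q (k' + 1))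
      have h2 := Nat.choose_succ_right_eq (k' + 1 + q) (q + 1)
      rw [show k' + 1 + q - (q + 1) = k' by omega] at h2
      have h2' := congrArg (Nat.cast : ℕ → ℝ) h2
      push_cast at h1 h2'
      simp only [Nat.succ_eq_add_one]
      push_cast
      linear_combination (r ^ (k' + 1) * ((q : ℝ) + 1)) * h2' - (r ^ (k' + 1) * (k' : ℝ)) * h1
  rw [hfun] at h
  rw [show ((q:ℝ) + 1) * ((q:ℝ) + 2) * r ^ 2 / (1 - r) ^ (q + 3) = ((q:ℝ) + 1) * ((q:ℝ) + 2) * (r ^ 2 / (1 - r) ^ (q + 3)) by ring]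
  exact h

lemma intPowIntegrable {c : ℝ} (hc : 0 < c) (j : ℕ) :
    IntegrableOn (fun t : ℝ => t ^ j * Real.exp (-(c * t))) (Ioi 0) := by
  have h := integrableOn_rpow_mul_exp_neg_mul_rpow (s := (j : ℝ)) (p := 1)
    (lt_of_lt_of_le neg_one_lt_zero (Nat.cast_nonneg j)) one_pos hc
  refine h.congr_fun (fun t ht => ?_) measurableSet_Ioi
  beta_reduce
  rw [Real.rpow_one, Real.rpow_natCast, neg_mul]

lemma intPowVal {c : ℝ} (hc : 0 < c) (j : ℕ) :
    ∫ t in Ioi (0:ℝ), t ^ j * Real.exp (-(c * t)) = (j.factorial : ℝ) / c ^ (j + 1) := by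
  have h := Real.integral_rpow_mul_exp_neg_mul_Ioi (a := (j : ℝ) + 1) (by positivity) hc
  rw [show ((j : ℝ) + 1) - 1 = (j : ℝ) by ring] at h
  rw [show ((j : ℝ) + 1) = ((j + 1 : ℕ) : ℝ) by push_cast; ring] at h
  rw [Real.rpow_natCast, Nat.cast_add, Nat.cast_one, Real.Gamma_nat_eq_factorial] at h
  calc ∫ t in Ioi (0:ℝ), t ^ j * Real.exp (-(c * t))
      = ∫ t in Ioi (0:ℝ), t ^ ((j:ℝ)) * Real.exp (-(c * t)) := by
        refine setIntegral_congr_fun measurableSet_Ioi (fun t ht => ?_)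
        rw [Real.rpow_natCast]
    _ = (1 / c) ^ (j + 1) * (j.factorial : ℝ) := h
    _ = (j.factorial : ℝ) / c ^ (j + 1) := by rw [div_pow, one_pow]; ring

lemma intK (n p : ℕ) (α β : ℝ) (hc : (0:ℝ) < (n:ℝ) + p) (hβ : (0:ℝ) < (n:ℝ) + β) (k : ℕ) :
    (∫ t in Ioi (0:ℝ), (((n:ℝ) * t + α) / ((n:ℝ) + β)) ^ 2 * bssS n p k t)
      = (1 / ((n:ℝ) + β) ^ 2) * ((n:ℝ) ^ 2 * ((k:ℝ) + 1) * ((k:ℝ) + 2) / ((n:ℝ) + p) ^ 3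
        + 2 * (n:ℝ) * α * ((k:ℝ) + 1) / ((n:ℝ) + p) ^ 2 + α ^ 2 / ((n:ℝ) + p)) := by
  have hkf : ((k.factorial : ℕ) : ℝ) ≠ 0 := Nat.cast_ne_zero.mpr k.factorial_ne_zero
  have e : ∀ t : ℝ, (((n:ℝ) * t + α) / ((n:ℝ) + β)) ^ 2 * bssS n p k t
      = (((n:ℝ) + p) ^ k / (((n:ℝ) + β) ^ 2 * (k.factorial : ℝ))) *
        ((n:ℝ) ^ 2 * (t ^ (k + 2) * Real.exp (-(((n:ℝ) + p) * t)))
          + (2 * (n:ℝ) * α) * (t ^ (k + 1) * Real.exp (-(((n:ℝ) + p) * t)))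
          + α ^ 2 * (t ^ k * Real.exp (-(((n:ℝ) + p) * t)))) := by
    intro t
    simp only [bssS, neg_mul, mul_pow]
    field_simp
    ring
  simp only [e]
  rw [integral_const_mul, integral_add, integral_add, integral_const_mul, integral_const_mul,
    integral_const_mul, intPowVal hc, intPowVal hc, intPowVal hc]
  · push_cast [Nat.factorial_succ]
    field_simp
    ring
  · exact (intPowIntegrable hc (k + 2)).const_mul _
  · exact (intPowIntegrable hc (k + 1)).const_mul _
  · exact ((intPowIntegrable hc (k + 2)).const_mul _).add ((intPowIntegrable hc (k + 1)).const_mul _)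
  · exact (intPowIntegrable hc k).const_mul _


set_option maxHeartbeats 1000000 in
theorem stmt_9 (n p : ℕ) (hn : 1 ≤ n) (hp : 1 ≤ p) (α β : ℝ)
    (hα : 0 ≤ α) (hαβ : α ≤ β) (x : ℝ) (hx : 0 ≤ x) :
    LSop α β n p (fun t => t ^ 2) x =
      ((n : ℝ) ^ 2 * ((n : ℝ) + p + 1) / (((n : ℝ) + p) * ((n : ℝ) + β) ^ 2)) * x ^ 2 +
      ((4 * (n : ℝ) ^ 2 + 2 * (n : ℝ) * α * ((n : ℝ) + p)) /
        (((n : ℝ) + p) * ((n : ℝ) + β) ^ 2)) * x +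
      (2 * (n : ℝ) ^ 2 + 2 * (n : ℝ) * α * ((n : ℝ) + p) + α ^ 2 * ((n : ℝ) + p) ^ 2) /
        (((n : ℝ) + p) ^ 2 * ((n : ℝ) + β) ^ 2) := by
  have hn' : (1:ℝ) ≤ n := by exact_mod_cast hn
  have hp' : (0:ℝ) ≤ p := Nat.cast_nonneg p
  have hc : (0:ℝ) < (n:ℝ) + p := by linarith
  have hβ0 : (0:ℝ) ≤ β := le_trans hα hαβ
  have hβ : (0:ℝ) < (n:ℝ) + β := by linarith
  have hx1 : (0:ℝ) < 1 + x := by linarith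
  obtain ⟨q, hq⟩ : ∃ q, n + p = q + 1 := ⟨n + p - 1, by omega⟩
  have hqc : (n:ℝ) + p = (q:ℝ) + 1 := by
    have := congrArg (Nat.cast : ℕ → ℝ) hq; push_cast at this; linarith
  set r : ℝ := x / (1 + x) with hrdef
  have hr0 : 0 ≤ r := by positivity
  have hrlt : ‖r‖ < 1 := by
    rw [Real.norm_eq_abs, abs_of_nonneg hr0, hrdef, div_lt_one hx1]; linarith
  have h1r : 1 - r = 1 / (1 + x) := by rw [hrdef]; field_simp; ring
  have hb : ∀ k : ℕ, bssB n p k x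
      = (((k + q).choose q : ℕ) : ℝ) * r ^ k * (1 / (1 + x) ^ (q + 1)) := by
    intro k
    have hck : (n + p + k - 1).choose k = (k + q).choose q := by
      rw [show n + p + k - 1 = k + q by omega, ← Nat.choose_symm (Nat.le_add_right k q),
        Nat.add_sub_cancel_left]
    rw [bssB, hck, show n + p + k = (q + 1) + k by omega, pow_add, hrdef, div_pow,
      mul_one_div, ← mul_div_assoc, div_div, mul_comm ((1 + x) ^ (q + 1)) ((1 + x) ^ k)]
  have hint : ∀ k : ℕ, (∫ t in Ioi (0:ℝ), (((n:ℝ) * t + α) / ((n:ℝ) + β)) ^ 2 * bssS n p k t)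
      = (1 / ((n:ℝ) + β) ^ 2) * ((n:ℝ) ^ 2 * ((k:ℝ) + 1) * ((k:ℝ) + 2) / ((n:ℝ) + p) ^ 3
        + 2 * (n:ℝ) * α * ((k:ℝ) + 1) / ((n:ℝ) + p) ^ 2 + α ^ 2 / ((n:ℝ) + p)) :=
    intK n p α β hc hβ
  have h0 := hs0 hrlt q
  have h1 := hs1 hrlt q
  have h2 := hs2 hrlt q
  have hcomb := ((h2.mul_left
      ((1 / (1 + x) ^ (q + 1)) * (1 / ((n:ℝ) + β) ^ 2) * ((n:ℝ) ^ 2 / ((n:ℝ) + p) ^ 3))).add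
    (h1.mul_left ((1 / (1 + x) ^ (q + 1)) * (1 / ((n:ℝ) + β) ^ 2) *
      (4 * (n:ℝ) ^ 2 / ((n:ℝ) + p) ^ 3 + 2 * (n:ℝ) * α / ((n:ℝ) + p) ^ 2)))).add
    (h0.mul_left ((1 / (1 + x) ^ (q + 1)) * (1 / ((n:ℝ) + β) ^ 2) *
      (2 * (n:ℝ) ^ 2 / ((n:ℝ) + p) ^ 3 + 2 * (n:ℝ) * α / ((n:ℝ) + p) ^ 2
        + α ^ 2 / ((n:ℝ) + p))))
  have hfun : (fun k : ℕ => bssB n p k x *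
        ((1 / ((n:ℝ) + β) ^ 2) * ((n:ℝ) ^ 2 * ((k:ℝ) + 1) * ((k:ℝ) + 2) / ((n:ℝ) + p) ^ 3
          + 2 * (n:ℝ) * α * ((k:ℝ) + 1) / ((n:ℝ) + p) ^ 2 + α ^ 2 / ((n:ℝ) + p))))
      = fun k : ℕ =>
        ((1 / (1 + x) ^ (q + 1)) * (1 / ((n:ℝ) + β) ^ 2) * ((n:ℝ) ^ 2 / ((n:ℝ) + p) ^ 3)) *
          ((k : ℝ) * ((k : ℝ) - 1) * (((k + q).choose q : ℕ) : ℝ) * r ^ k) +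
        ((1 / (1 + x) ^ (q + 1)) * (1 / ((n:ℝ) + β) ^ 2) *
          (4 * (n:ℝ) ^ 2 / ((n:ℝ) + p) ^ 3 + 2 * (n:ℝ) * α / ((n:ℝ) + p) ^ 2)) *
          ((k : ℝ) * (((k + q).choose q : ℕ) : ℝ) * r ^ k) +
        ((1 / (1 + x) ^ (q + 1)) * (1 / ((n:ℝ) + β) ^ 2) *
          (2 * (n:ℝ) ^ 2 / ((n:ℝ) + p) ^ 3 + 2 * (n:ℝ) * α / ((n:ℝ) + p) ^ 2
            + α ^ 2 / ((n:ℝ) + p))) *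
          ((((k + q).choose q : ℕ) : ℝ) * r ^ k) := by
    funext k
    rw [hb k]
    ring
  rw [← hfun] at hcomb
  simp only [LSop, Lop]
  rw [tsum_congr (fun k => by rw [hint k] :
    ∀ k : ℕ, bssB n p k x * (∫ t in Ioi (0:ℝ), (((n:ℝ) * t + α) / ((n:ℝ) + β)) ^ 2 * bssS n p k t)
      = bssB n p k x * ((1 / ((n:ℝ) + β) ^ 2) *
        ((n:ℝ) ^ 2 * ((k:ℝ) + 1) * ((k:ℝ) + 2) / ((n:ℝ) + p) ^ 3
          + 2 * (n:ℝ) * α * ((k:ℝ) + 1) / ((n:ℝ) + p) ^ 2 + α ^ 2 / ((n:ℝ) + p))))]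
  rw [hcomb.tsum_eq]
  have hpow : ∀ j : ℕ, ((1:ℝ) / (1 + x)) ^ j = 1 / (1 + x) ^ j := by
    intro j; rw [div_pow, one_pow]
  have hr1 : r * (1 + x) = x := by rw [hrdef]; field_simp
  have hr2 : r ^ 2 * (1 + x) ^ 2 = x ^ 2 := by rw [hrdef]; field_simp
  have hS0 : (1:ℝ) / (1 - r) ^ (q + 1) = (1 + x) ^ (q + 1) := by
    rw [h1r, hpow, one_div_one_div]
  have hS1 : ((q:ℝ) + 1) * r / (1 - r) ^ (q + 2) = ((q:ℝ) + 1) * x * (1 + x) ^ (q + 1) := by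
    rw [h1r, hpow, one_div ((1 + x) ^ (q + 2)), div_inv_eq_mul, show q + 2 = (q + 1) + 1 from rfl, pow_succ]
    linear_combination ((q:ℝ) + 1) * (1 + x) ^ (q + 1) * hr1
  have hS2 : ((q:ℝ) + 1) * ((q:ℝ) + 2) * r ^ 2 / (1 - r) ^ (q + 3)
      = ((q:ℝ) + 1) * ((q:ℝ) + 2) * x ^ 2 * (1 + x) ^ (q + 1) := by
    rw [h1r, hpow, one_div ((1 + x) ^ (q + 3)), div_inv_eq_mul, show q + 3 = (q + 1) + 2 from rfl, pow_add]
    linear_combination ((q:ℝ) + 1) * ((q:ℝ) + 2) * (1 + x) ^ (q + 1) * hr2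
  rw [hS0, hS1, hS2, hqc]
  have hq1 : ((q:ℝ) + 1) ≠ 0 := by positivity
  obtain ⟨u, hU, hu⟩ : ∃ u : ℝ, ((1:ℝ) + x) ^ (q + 1) = u ∧ u ≠ 0 :=
    ⟨_, rfl, by positivity⟩
  rw [hU]
  have e2 : ((q:ℝ) + 1) * (1 / u * (1 / ((n:ℝ) + β) ^ 2) * ((n:ℝ) ^ 2 / ((q:ℝ) + 1) ^ 3) *
        (((q:ℝ) + 1) * ((q:ℝ) + 2) * x ^ 2 * u))
      = (n:ℝ) ^ 2 * ((q:ℝ) + 1 + 1) / (((q:ℝ) + 1) * ((n:ℝ) + β) ^ 2) * x ^ 2 := by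
    field_simp
    ring
  have e1 : ((q:ℝ) + 1) * (1 / u * (1 / ((n:ℝ) + β) ^ 2) *
        (4 * (n:ℝ) ^ 2 / ((q:ℝ) + 1) ^ 3 + 2 * (n:ℝ) * α / ((q:ℝ) + 1) ^ 2) *
        (((q:ℝ) + 1) * x * u))
      = (4 * (n:ℝ) ^ 2 + 2 * (n:ℝ) * α * ((q:ℝ) + 1)) / (((q:ℝ) + 1) * ((n:ℝ) + β) ^ 2) * x := by
    field_simp
  have e0 : ((q:ℝ) + 1) * (1 / u * (1 / ((n:ℝ) + β) ^ 2) *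
        (2 * (n:ℝ) ^ 2 / ((q:ℝ) + 1) ^ 3 + 2 * (n:ℝ) * α / ((q:ℝ) + 1) ^ 2 + α ^ 2 / ((q:ℝ) + 1)) * u)
      = (2 * (n:ℝ) ^ 2 + 2 * (n:ℝ) * α * ((q:ℝ) + 1) + α ^ 2 * ((q:ℝ) + 1) ^ 2) /
          (((q:ℝ) + 1) ^ 2 * ((n:ℝ) + β) ^ 2) := by
    field_simp
  rw [mul_add, mul_add, e2, e1, e0]
end

section
/- For the Baskakov-Schurer-Szász-Stancu operators, the second central moment is L^{(α,β)}_{n,p}((t−x)²; x) = [(n² + β²(n+p))/((n+p)(n+β)²)] x² + [(2n² − 2nβ(1+α) − 2αpβ)/((n+p)(n+β)²)] x + [(2n² + 2nα(n+p) + α²(n+p)²)/((n+β)²(n+p)²)]. -/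
open MeasureTheory Set Filter

lemma int_pow_exp (j : ℕ) {c : ℝ} (hc : 0 < c) :
    ∫ t in Ioi (0:ℝ), t ^ j * Real.exp (-(c * t)) = (Nat.factorial j : ℝ) / c ^ (j + 1) := by
  have h := Real.integral_rpow_mul_exp_neg_mul_Ioi (a := (j : ℝ) + 1) (by positivity) hc
  rw [show ((j:ℝ) + 1) - 1 = (j:ℝ) by ring] at h
  simp only [Real.rpow_natCast] at h
  rw [h, show ((j:ℝ) + 1) = ((j + 1 : ℕ) : ℝ) by push_cast; ring, Real.rpow_natCast,
    Nat.cast_add, Nat.cast_one, Real.Gamma_nat_eq_factorial]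
  rw [one_div, inv_pow]
  field_simp

lemma intOn_pow_exp (j : ℕ) {c : ℝ} (hc : 0 < c) :
    IntegrableOn (fun t : ℝ => t ^ j * Real.exp (-(c * t))) (Ioi (0:ℝ)) := by
  have h := integrableOn_rpow_mul_exp_neg_mul_rpow (s := (j:ℝ)) (p := 1)
    (by exact_mod_cast neg_one_lt_zero.trans_le (Nat.cast_nonneg j)) one_pos hc
  simp only [Real.rpow_one, Real.rpow_natCast, neg_mul] at h ⊢
  exact h

lemma int_quad (n p k : ℕ) (hc : 0 < (n:ℝ) + p) (q d : ℝ) :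
    ∫ t in Ioi (0:ℝ), (q * t + d) ^ 2 * bssS n p k t =
      (q ^ 2 * ((k:ℝ) + 1) * ((k:ℝ) + 2) + 2 * q * d * ((k:ℝ) + 1) * ((n:ℝ) + p)
        + d ^ 2 * ((n:ℝ) + p) ^ 2) / ((n:ℝ) + p) ^ 3 := by
  set c : ℝ := (n:ℝ) + p with hcdef
  have hk : (Nat.factorial k : ℝ) ≠ 0 := by positivity
  have hptw : (fun t : ℝ => (q * t + d) ^ 2 * bssS n p k t) =
      fun t : ℝ => (c ^ k / (Nat.factorial k)) *
        (q ^ 2 * (t ^ (k + 2) * Real.exp (-(c * t)))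
          + (2 * q * d * (t ^ (k + 1) * Real.exp (-(c * t)))
          + d ^ 2 * (t ^ k * Real.exp (-(c * t))))) := by
    funext t
    rw [bssS, neg_mul, ← hcdef, mul_pow]
    ring
  have h1 := (intOn_pow_exp (k+2) hc).const_mul (q ^ 2)
  have h2 := (intOn_pow_exp (k+1) hc).const_mul (2 * q * d)
  have h3 := (intOn_pow_exp k hc).const_mul (d ^ 2)
  have split :
      (∫ t in Ioi (0:ℝ), (q ^ 2 * (t ^ (k + 2) * Real.exp (-(c * t))) +
          (2 * q * d * (t ^ (k + 1) * Real.exp (-(c * t))) + d ^ 2 * (t ^ k * Real.exp (-(c * t)))))) =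
        (∫ t in Ioi (0:ℝ), q ^ 2 * (t ^ (k + 2) * Real.exp (-(c * t)))) +
        ((∫ t in Ioi (0:ℝ), 2 * q * d * (t ^ (k + 1) * Real.exp (-(c * t)))) +
         (∫ t in Ioi (0:ℝ), d ^ 2 * (t ^ k * Real.exp (-(c * t))))) :=
    (MeasureTheory.integral_add h1 (h2.add h3)).trans
      (congrArg _ (MeasureTheory.integral_add h2 h3))
  rw [hptw, MeasureTheory.integral_const_mul, split,
    MeasureTheory.integral_const_mul, MeasureTheory.integral_const_mul,
    MeasureTheory.integral_const_mul, int_pow_exp _ hc, int_pow_exp _ hc, int_pow_exp _ hc]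
  have h2 : (Nat.factorial (k+2) : ℝ) = ((k:ℝ)+2) * (((k:ℝ)+1) * (Nat.factorial k)) := by
    rw [Nat.factorial_succ, Nat.factorial_succ]; push_cast; ring
  have h1 : (Nat.factorial (k+1) : ℝ) = ((k:ℝ)+1) * (Nat.factorial k) := by
    rw [Nat.factorial_succ]; push_cast; ring
  rw [h2, h1]
  have hc0 : c ≠ 0 := ne_of_gt hc
  field_simp
  ring

lemma hr_lt {x : ℝ} (hx : 0 ≤ x) : ‖x / (1 + x)‖ < 1 := by
  rw [Real.norm_eq_abs, abs_of_nonneg (by positivity)]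
  rw [div_lt_one (by positivity)]; linarith

lemma one_sub_r {x : ℝ} (hx : 0 ≤ x) : 1 - x / (1 + x) = (1 + x)⁻¹ := by
  have h : (1:ℝ) + x ≠ 0 := by positivity
  field_simp
  ring

lemma hasSum_b0 (m : ℕ) {x : ℝ} (hx : 0 ≤ x) :
    HasSum (fun k : ℕ => (((k + m).choose m : ℕ) : ℝ) * (x / (1 + x)) ^ k)
      ((1 + x) ^ (m + 1)) := by
  have h := hasSum_choose_mul_geometric_of_norm_lt_one (𝕜 := ℝ) m (hr_lt hx)
  rwa [one_sub_r hx, one_div, inv_pow, inv_inv] at h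

lemma hasSum_b1 (m : ℕ) {x : ℝ} (hx : 0 ≤ x) :
    HasSum (fun k : ℕ => (k : ℝ) * (((k + m).choose m : ℕ) : ℝ) * (x / (1 + x)) ^ k)
      (((m : ℝ) + 1) * x * (1 + x) ^ (m + 1)) := by
  have hx1 : (1:ℝ) + x ≠ 0 := by positivity
  have key : ∀ k : ℕ,
      ((k + 1 : ℕ) : ℝ) * (((k + 1 + m).choose m : ℕ) : ℝ) * (x / (1 + x)) ^ (k + 1) =
      (((m : ℝ) + 1) * (x / (1 + x))) *
        ((((k + (m + 1)).choose (m + 1) : ℕ) : ℝ) * (x / (1 + x)) ^ k) := by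
    intro k
    have hnat : (k + 1) * ((k + 1 + m).choose m) = (m + 1) * ((k + (m + 1)).choose (m + 1)) := by
      have h := Nat.choose_succ_right_eq (k + m + 1) m
      rw [show k + m + 1 - m = k + 1 by omega] at h
      rw [show k + 1 + m = k + m + 1 by omega, show k + (m + 1) = k + m + 1 by omega]
      rw [mul_comm (k+1), mul_comm (m+1), h]
    calc ((k + 1 : ℕ) : ℝ) * (((k + 1 + m).choose m : ℕ) : ℝ) * (x / (1 + x)) ^ (k + 1)
        = (((k + 1) * ((k + 1 + m).choose m) : ℕ) : ℝ) * (x / (1 + x)) ^ (k + 1) := by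
          push_cast; ring
      _ = (((m + 1) * ((k + (m + 1)).choose (m + 1)) : ℕ) : ℝ) * (x / (1 + x)) ^ (k + 1) := by
          rw [hnat]
      _ = _ := by push_cast; ring
  have h2 : HasSum
      (fun k : ℕ => ((k + 1 : ℕ) : ℝ) * (((k + 1 + m).choose m : ℕ) : ℝ) * (x / (1 + x)) ^ (k + 1))
      ((((m : ℝ) + 1) * (x / (1 + x))) * ((1 + x) ^ (m + 2))) := by
    have := (hasSum_b0 (m + 1) hx).mul_left (((m : ℝ) + 1) * (x / (1 + x)))
    simpa only [key] using this
  have h3 := (hasSum_nat_add_iff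
    (f := fun k : ℕ => (k : ℝ) * (((k + m).choose m : ℕ) : ℝ) * (x / (1 + x)) ^ k) 1).mp h2
  simp only [Finset.range_one, Finset.sum_singleton, Nat.cast_zero, zero_mul, add_zero] at h3
  convert h3 using 1
  · rfl
  have : x / (1 + x) * (1 + x) ^ (m + 2) = x * (1 + x) ^ (m + 1) := by
    rw [pow_succ]; field_simp
  calc ((m : ℝ) + 1) * x * (1 + x) ^ (m + 1)
      = ((m : ℝ) + 1) * (x / (1 + x) * (1 + x) ^ (m + 2)) := by rw [this]; ring
    _ = _ := by ring

lemma hasSum_b2 (m : ℕ) {x : ℝ} (hx : 0 ≤ x) :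
    HasSum (fun k : ℕ => (k : ℝ) ^ 2 * (((k + m).choose m : ℕ) : ℝ) * (x / (1 + x)) ^ k)
      (((m : ℝ) + 1) * x * (1 + x) ^ (m + 1) * (((m : ℝ) + 2) * x + 1)) := by
  have hx1 : (1:ℝ) + x ≠ 0 := by positivity
  have key : ∀ k : ℕ,
      ((k + 1 : ℕ) : ℝ) ^ 2 * (((k + 1 + m).choose m : ℕ) : ℝ) * (x / (1 + x)) ^ (k + 1) =
      (((m : ℝ) + 1) * (x / (1 + x))) *
        ((k : ℝ) * (((k + (m + 1)).choose (m + 1) : ℕ) : ℝ) * (x / (1 + x)) ^ k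
          + (((k + (m + 1)).choose (m + 1) : ℕ) : ℝ) * (x / (1 + x)) ^ k) := by
    intro k
    have hnat : (k + 1) * ((k + 1 + m).choose m) = (m + 1) * ((k + (m + 1)).choose (m + 1)) := by
      have h := Nat.choose_succ_right_eq (k + m + 1) m
      rw [show k + m + 1 - m = k + 1 by omega] at h
      rw [show k + 1 + m = k + m + 1 by omega, show k + (m + 1) = k + m + 1 by omega]
      rw [mul_comm (k+1), mul_comm (m+1), h]
    calc ((k + 1 : ℕ) : ℝ) ^ 2 * (((k + 1 + m).choose m : ℕ) : ℝ) * (x / (1 + x)) ^ (k + 1)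
        = ((k:ℝ) + 1) * ((((k + 1) * ((k + 1 + m).choose m) : ℕ) : ℝ) * (x / (1 + x)) ^ (k + 1)) := by
          push_cast; ring
      _ = ((k:ℝ) + 1) * ((((m + 1) * ((k + (m + 1)).choose (m + 1)) : ℕ) : ℝ) * (x / (1 + x)) ^ (k + 1)) := by
          rw [hnat]
      _ = _ := by push_cast; ring
  have h2 : HasSum
      (fun k : ℕ => ((k + 1 : ℕ) : ℝ) ^ 2 * (((k + 1 + m).choose m : ℕ) : ℝ) * (x / (1 + x)) ^ (k + 1))
      ((((m : ℝ) + 1) * (x / (1 + x))) *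
        ((((m : ℝ) + 1) + 1) * x * (1 + x) ^ ((m + 1) + 1) + (1 + x) ^ ((m + 1) + 1))) := by
    have := ((hasSum_b1 (m + 1) hx).add (hasSum_b0 (m + 1) hx)).mul_left
      (((m : ℝ) + 1) * (x / (1 + x)))
    simp only [key]
    convert this using 2
    · rfl
    push_cast; ring
  have h3 := (hasSum_nat_add_iff
    (f := fun k : ℕ => (k : ℝ) ^ 2 * (((k + m).choose m : ℕ) : ℝ) * (x / (1 + x)) ^ k) 1).mp h2
  simp only [Finset.range_one, Finset.sum_singleton, Nat.cast_zero, zero_mul, add_zero,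
    ne_eq, OfNat.ofNat_ne_zero, not_false_eq_true, zero_pow] at h3
  convert h3 using 1
  · rfl
  rw [show m + 1 + 1 = m + 2 from rfl, pow_succ]
  field_simp
  ring

lemma bssB_eq (n p m k : ℕ) (hm : n + p = m + 1) {x : ℝ} (hx : 0 ≤ x) :
    bssB n p k x = (((k + m).choose m : ℕ) : ℝ) * (x / (1 + x)) ^ k / (1 + x) ^ (m + 1) := by
  have hx1 : (1:ℝ) + x ≠ 0 := by positivity
  rw [bssB, hm, show m + 1 + k - 1 = k + m by omega, show m + 1 + k = (m + 1) + k from rfl]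
  have hch : (k + m).choose k = (k + m).choose m := by
    have := Nat.choose_symm (Nat.le_add_right k m)
    rw [show k + m - k = m by omega] at this
    exact this.symm
  rw [hch, pow_add, div_pow]
  field_simp

lemma hasSum_B0 (n p m : ℕ) (hm : n + p = m + 1) {x : ℝ} (hx : 0 ≤ x) :
    HasSum (fun k : ℕ => bssB n p k x) 1 := by
  have hx1 : ((1:ℝ) + x) ^ (m + 1) ≠ 0 := by positivity
  have h := (hasSum_b0 m hx).mul_left (((1 + x) ^ (m + 1))⁻¹)
  rw [inv_mul_cancel₀ hx1] at h
  refine HasSum.congr_fun h fun k => ?_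
  rw [bssB_eq n p m k hm hx]; ring

lemma hasSum_B1 (n p m : ℕ) (hm : n + p = m + 1) {x : ℝ} (hx : 0 ≤ x) :
    HasSum (fun k : ℕ => (k : ℝ) * bssB n p k x) (((n:ℝ) + p) * x) := by
  have hx1 : ((1:ℝ) + x) ^ (m + 1) ≠ 0 := by positivity
  have hnp : ((n:ℝ) + p) = (m : ℝ) + 1 := by
    have : ((n + p : ℕ) : ℝ) = ((m + 1 : ℕ) : ℝ) := by rw [hm]
    push_cast at this; linarith
  have h := (hasSum_b1 m hx).mul_left (((1 + x) ^ (m + 1))⁻¹)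
  have hval : ((1 + x) ^ (m + 1))⁻¹ * (((m : ℝ) + 1) * x * (1 + x) ^ (m + 1)) =
      ((n:ℝ) + p) * x := by
    rw [hnp]; field_simp
  rw [hval] at h
  refine HasSum.congr_fun h fun k => ?_
  rw [bssB_eq n p m k hm hx]; ring

lemma hasSum_B2 (n p m : ℕ) (hm : n + p = m + 1) {x : ℝ} (hx : 0 ≤ x) :
    HasSum (fun k : ℕ => (k : ℝ) ^ 2 * bssB n p k x)
      (((n:ℝ) + p) * x * ((((n:ℝ) + p) + 1) * x + 1)) := by
  have hx1 : ((1:ℝ) + x) ^ (m + 1) ≠ 0 := by positivity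
  have hnp : ((n:ℝ) + p) = (m : ℝ) + 1 := by
    have : ((n + p : ℕ) : ℝ) = ((m + 1 : ℕ) : ℝ) := by rw [hm]
    push_cast at this; linarith
  have h := (hasSum_b2 m hx).mul_left (((1 + x) ^ (m + 1))⁻¹)
  have hval : ((1 + x) ^ (m + 1))⁻¹ *
      (((m : ℝ) + 1) * x * (1 + x) ^ (m + 1) * (((m : ℝ) + 2) * x + 1)) =
      ((n:ℝ) + p) * x * ((((n:ℝ) + p) + 1) * x + 1) := by
    rw [hnp]; field_simp; ring
  rw [hval] at h
  refine HasSum.congr_fun h fun k => ?_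
  rw [bssB_eq n p m k hm hx]; ring

theorem stmt_11 (n p : ℕ) (hn : 1 ≤ n) (hp : 1 ≤ p) (α β : ℝ)
    (hα : 0 ≤ α) (hαβ : α ≤ β) (x : ℝ) (hx : 0 ≤ x) :
    LSop α β n p (fun t => (t - x) ^ 2) x =
      (((n : ℝ) ^ 2 + β ^ 2 * ((n : ℝ) + p)) / (((n : ℝ) + p) * ((n : ℝ) + β) ^ 2)) * x ^ 2 +
      ((2 * (n : ℝ) ^ 2 - 2 * (n : ℝ) * β * (1 + α) - 2 * α * p * β) /
        (((n : ℝ) + p) * ((n : ℝ) + β) ^ 2)) * x +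
      (2 * (n : ℝ) ^ 2 + 2 * (n : ℝ) * α * ((n : ℝ) + p) + α ^ 2 * ((n : ℝ) + p) ^ 2) /
        (((n : ℝ) + β) ^ 2 * ((n : ℝ) + p) ^ 2) := by
  have hn1 : (1:ℝ) ≤ (n:ℝ) := by exact_mod_cast hn
  have hp0 : (0:ℝ) ≤ (p:ℝ) := Nat.cast_nonneg p
  have hβ0 : (0:ℝ) ≤ β := le_trans hα hαβ
  have hc : (0:ℝ) < (n:ℝ) + p := by linarith
  have hnβ : (0:ℝ) < (n:ℝ) + β := by linarith
  obtain ⟨m, hm⟩ : ∃ m, n + p = m + 1 := ⟨n + p - 1, by omega⟩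
  set q : ℝ := (n:ℝ) / ((n:ℝ) + β) with hq
  set d : ℝ := α / ((n:ℝ) + β) - x with hd
  have hint : ∀ k : ℕ,
      (∫ t in Ioi (0:ℝ), (((n:ℝ) * t + α) / ((n:ℝ) + β) - x) ^ 2 * bssS n p k t) =
      (q ^ 2 * ((k:ℝ) + 1) * ((k:ℝ) + 2) + 2 * q * d * ((k:ℝ) + 1) * ((n:ℝ) + p)
        + d ^ 2 * ((n:ℝ) + p) ^ 2) / ((n:ℝ) + p) ^ 3 := by
    intro k
    rw [MeasureTheory.setIntegral_congr_fun (g := fun t => (q * t + d) ^ 2 * bssS n p k t)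
      measurableSet_Ioi (fun t _ => by rw [hq, hd]; ring_nf), int_quad n p k hc q d]
  have hsum : HasSum (fun k : ℕ => bssB n p k x *
      ((q ^ 2 * ((k:ℝ) + 1) * ((k:ℝ) + 2) + 2 * q * d * ((k:ℝ) + 1) * ((n:ℝ) + p)
        + d ^ 2 * ((n:ℝ) + p) ^ 2) / ((n:ℝ) + p) ^ 3))
      ((q ^ 2 / ((n:ℝ) + p) ^ 3) * (((n:ℝ) + p) * x * ((((n:ℝ) + p) + 1) * x + 1)) +
       (((3 * q ^ 2 + 2 * q * d * ((n:ℝ) + p)) / ((n:ℝ) + p) ^ 3) * (((n:ℝ) + p) * x) +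
        ((2 * q ^ 2 + 2 * q * d * ((n:ℝ) + p) + d ^ 2 * ((n:ℝ) + p) ^ 2) / ((n:ℝ) + p) ^ 3) * 1)) := by
    have h := ((hasSum_B2 n p m hm hx).mul_left (q ^ 2 / ((n:ℝ) + p) ^ 3)).add
      (((hasSum_B1 n p m hm hx).mul_left ((3 * q ^ 2 + 2 * q * d * ((n:ℝ) + p)) / ((n:ℝ) + p) ^ 3)).add
        ((hasSum_B0 n p m hm hx).mul_left
          ((2 * q ^ 2 + 2 * q * d * ((n:ℝ) + p) + d ^ 2 * ((n:ℝ) + p) ^ 2) / ((n:ℝ) + p) ^ 3)))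
    refine HasSum.congr_fun h fun k => ?_
    ring
  have hLS : LSop α β n p (fun t => (t - x) ^ 2) x =
      ((n:ℝ) + p) * ∑' k : ℕ, bssB n p k x *
      ((q ^ 2 * ((k:ℝ) + 1) * ((k:ℝ) + 2) + 2 * q * d * ((k:ℝ) + 1) * ((n:ℝ) + p)
        + d ^ 2 * ((n:ℝ) + p) ^ 2) / ((n:ℝ) + p) ^ 3) := by
    simp only [LSop, Lop]
    congr 1
    exact tsum_congr fun k => by rw [hint k]
  rw [hLS, hsum.tsum_eq, hq, hd]
  have hc' : ((n:ℝ) + p) ≠ 0 := ne_of_gt hc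
  have hnβ' : ((n:ℝ) + β) ≠ 0 := ne_of_gt hnβ
  field_simp
  ring
end

section
/- For the q-Baskakov-Schurer-Szász operator with 0 < q < 1, the second central moment satisfies L^q_{n,p}((t−x)²; x) ≤ (9/q⁶)(1 − q³ + 1/[n+p]_q)(x+1)² for all x ≥ 0. -/
/-- q-integer `[m]_q = (1 − q^m)/(1 − q)`. -/
noncomputable def qint (q : ℝ) (m : ℕ) : ℝ := (1 - q ^ m) / (1 - q)

lemma aux_ineq (q N x : ℝ) (hq0 : 0 < q) (hq1 : q < 1) (hN : 1 ≤ N) (hx : 0 ≤ x) :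
    ((1 + q * N) / (q ^ 6 * N)) * x ^ 2 + ((1 + 2 * q + q ^ 2) / (q ^ 5 * N)) * x +
      (1 + q) / (q ^ 3 * N ^ 2) - 2 * x * (x / q ^ 2 + 1 / (q * N)) + x ^ 2 ≤
    (9 / q ^ 6) * (1 - q ^ 3 + 1 / N) * (x + 1) ^ 2 := by
  have hNpos : 0 < N := lt_of_lt_of_le one_pos hN
  rw [← sub_nonneg]
  have e : (9 / q ^ 6) * (1 - q ^ 3 + 1 / N) * (x + 1) ^ 2 -
      (((1 + q * N) / (q ^ 6 * N)) * x ^ 2 + ((1 + 2 * q + q ^ 2) / (q ^ 5 * N)) * x +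
      (1 + q) / (q ^ 3 * N ^ 2) - 2 * x * (x / q ^ 2 + 1 / (q * N)) + x ^ 2) =
      ( (9 * (1 - q^3) * N^2 + 9 * N) * (x+1)^2
        - ((1 + q*N) * x^2 * N + (1 + 2*q+q^2) * q * x * N + (1+q) * q^3
           - 2 * (x^2 * q^4 * N^2 + q^5 * x * N) + q^6 * x^2 * N^2) ) / (q^6 * N^2) := by
    field_simp
  rw [e]
  apply div_nonneg _ (by positivity)
  have hA : q - 2*q^4 + q^6 ≤ 9 - 9*q^3 := by
    nlinarith [pow_pos hq0 3, pow_pos hq0 6, sq_nonneg (q^3 - q),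
      pow_le_one₀ hq0.le hq1.le (n := 6), pow_le_one₀ hq0.le hq1.le (n := 4)]
  have c2 : (1 + q*N)*N - 2*q^4*N^2 + q^6*N^2 ≤ 9*(1-q^3)*N^2 + 9*N := by
    nlinarith [mul_le_mul_of_nonneg_right hA (sq_nonneg N), hNpos.le, sq_nonneg N]
  have c1 : (1 + 2*q + q^2)*q*N - 2*q^5*N ≤ 18*(1-q^3)*N^2 + 18*N := by
    nlinarith [mul_pos hNpos hNpos, pow_pos hq0 3, pow_pos hq0 5, hNpos,
      mul_le_mul_of_nonneg_right (pow_le_one₀ hq0.le hq1.le (n := 2)) hNpos.le,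
      mul_le_mul_of_nonneg_right hq1.le hNpos.le,
      mul_nonneg (mul_nonneg (sub_nonneg.2 (pow_le_one₀ hq0.le hq1.le (n := 3))) hNpos.le) hNpos.le]
  have c0 : (1+q)*q^3 ≤ 9*(1-q^3)*N^2 + 9*N := by
    nlinarith [mul_nonneg (sub_nonneg.2 (pow_le_one₀ hq0.le hq1.le (n := 3))) (sq_nonneg N),
      one_le_pow₀ hN (n := 2), hN, pow_le_one₀ hq0.le hq1.le (n := 3)]
  nlinarith [mul_le_mul_of_nonneg_right c2 (sq_nonneg x), mul_le_mul_of_nonneg_right c1 hx, c0]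

theorem stmt_18 (q : ℝ) (hq0 : 0 < q) (hq1 : q < 1) (n p : ℕ) (hn : 1 ≤ n) (hp : 1 ≤ p)
    (L : (ℝ → ℝ) → ℝ → ℝ)
    (hlin : ∀ (a b : ℝ) (f g : ℝ → ℝ) (y : ℝ),
      L (fun t => a * f t + b * g t) y = a * L f y + b * L g y)
    (x : ℝ) (hx : 0 ≤ x)
    (h0 : L (fun _ => (1 : ℝ)) x = 1)
    (h1 : L (fun t => t) x = x / q ^ 2 + 1 / (q * qint q (n + p)))
    (h2 : L (fun t => t ^ 2) x =
      (qint q (n + p + 1) / (q ^ 6 * qint q (n + p))) * x ^ 2 +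
      ((1 + 2 * q + q ^ 2) / (q ^ 5 * qint q (n + p))) * x +
      (1 + q) / (q ^ 3 * qint q (n + p) ^ 2)) :
    L (fun t => (t - x) ^ 2) x ≤
      (9 / q ^ 6) * (1 - q ^ 3 + 1 / qint q (n + p)) * (x + 1) ^ 2 := by
  set N := qint q (n + p) with hNdef
  have hq' : 0 < 1 - q := by linarith
  have hN : 1 ≤ N := by
    rw [hNdef, qint, le_div_iff₀ hq']
    have : q ^ (n + p) ≤ q ^ 1 := pow_le_pow_of_le_one hq0.le hq1.le (by omega)
    simpa using by linarith [this]
  have hNpos : 0 < N := lt_of_lt_of_le one_pos hN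
  have hrel : qint q (n + p + 1) = 1 + q * N := by
    rw [hNdef, qint, qint, pow_succ]
    field_simp
    ring
  have d1 : L (fun t => (t - x) ^ 2) x =
      1 * L (fun t => t ^ 2) x + 1 * L (fun t => (-(2*x)) * t + x ^ 2 * 1) x := by
    rw [← hlin]
    congr 1
    funext t
    ring
  have d2 : L (fun t => (-(2*x)) * t + x ^ 2 * 1) x
      = (-(2*x)) * L (fun t => t) x + x ^ 2 * L (fun _ => (1:ℝ)) x := by
    exact hlin (-(2*x)) (x ^ 2) (fun t => t) (fun _ => (1:ℝ)) x
  have key := aux_ineq q N x hq0 hq1 hN hx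
  calc L (fun t => (t - x) ^ 2) x
      = ((1 + q * N) / (q ^ 6 * N)) * x ^ 2 + ((1 + 2 * q + q ^ 2) / (q ^ 5 * N)) * x +
        (1 + q) / (q ^ 3 * N ^ 2) - 2 * x * (x / q ^ 2 + 1 / (q * N)) + x ^ 2 := by
        rw [d1, d2, h0, h1, h2, hrel]; ring
    _ ≤ _ := key
end
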